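/- Let A be a list of natural numbers of length n ≥ 1 with C(A) = 1. Let M be the maximum of C(A[1..i]) over prefixes A[1..i] for i = 1, …, n, and let k be the least index i with C(A[1..i]) = M. Then the list (drop k A) ++ (take k A), i.e., A[k+1..n] ++ A[1..k], is a well-formed expression. (This is the correctness of the rotation point found by the algorithm Get-Random-Tree.) -/

import Mathlib

/-- `C v` is the length of `v` minus the sum of its entries. -/
def C (v : List ℕ) : ℤ := (v.length : ℤ) - (v.sum : ℤ)

/-- A list of natural numbers is a well-formed expression (Polish notation
encoding of an ordered rooted tree by outdegrees) if it is of the form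
`d :: (w₁ ++ ⋯ ++ w_d)` where each `wᵢ` is a well-formed expression. -/
inductive IsWF : List ℕ → Prop
  | node (d : ℕ) (ws : List (List ℕ)) (hlen : ws.length = d)
      (h : ∀ w ∈ ws, IsWF w) : IsWF (d :: ws.flatten)

/-- The `k`-rotation of `s = u ++ v` with `v` of length `k` is `v ++ u`. -/
def krot (k : ℕ) (s : List ℕ) : List ℕ :=
  s.drop (s.length - k) ++ s.take (s.length - k)

lemma C_append (u v : List ℕ) : C (u ++ v) = C u + C v := by
  simp [C]; ring

lemma C_cons (a : ℕ) (t : List ℕ) : C (a :: t) = 1 - a + C t := by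
  simp [C]; ring

lemma C_step (t : List ℕ) (i : ℕ) (hi : i < t.length) :
    C (t.take (i + 1)) ≤ C (t.take i) + 1 := by
  rw [List.take_succ, List.getElem?_eq_getElem hi]
  simp only [Option.toList_some, C_append]
  have : C [t[i]] = 1 - (t[i] : ℤ) := by simp [C]
  rw [this]
  have : (0 : ℤ) ≤ (t[i] : ℤ) := Int.natCast_nonneg _
  linarith

lemma splitPieces (d : ℕ) : ∀ t : List ℕ, C t = d →
    (∀ i < t.length, C (t.take i) ≤ (d : ℤ) - 1) →
    ∃ ws : List (List ℕ), ws.length = d ∧ ws.flatten = t ∧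
      ∀ w ∈ ws, C w = 1 ∧ ∀ i < w.length, C (w.take i) ≤ 0 := by
  induction d with
  | zero =>
    intro t h1 h2
    have ht : t = [] := by
      cases t with
      | nil => rfl
      | cons a s =>
        exfalso
        have := h2 0 (by simp)
        simp [C] at this
    exact ⟨[], rfl, by simp [ht], by simp⟩
  | succ d ih =>
    intro t h1 h2
    -- t is nonempty
    have htne : t.length ≠ 0 := by
      intro h
      rw [List.length_eq_zero_iff] at h
      simp [h, C] at h1
      omega
    -- find least j with C (t.take j) ≥ 1
    have hP : ∃ j, 1 ≤ C (t.take j) := ⟨t.length, by rw [List.take_length, h1]; exact_mod_cast Nat.one_le_iff_ne_zero.mpr (by omega)⟩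
    classical
    let j := Nat.find hP
    have hj : 1 ≤ C (t.take j) := Nat.find_spec hP
    have hjmin : ∀ i < j, C (t.take i) < 1 := by
      intro i hij
      have := Nat.find_min hP hij
      omega
    have hj1 : 1 ≤ j := by
      by_contra h
      have : j = 0 := by omega
      rw [this] at hj
      simp [C] at hj
    have hjle : j ≤ t.length := by
      by_contra h
      push_neg at h
      have : t.take j = t := List.take_of_length_le (le_of_lt h)
      rw [this, h1] at hj
      have := hjmin t.length h
      rw [List.take_length, h1] at this
      omega
    have hjeq : C (t.take j) = 1 := by
      have hlt : j - 1 < t.length := by omega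
      have := C_step t (j - 1) hlt
      have h2' : C (t.take (j - 1)) < 1 := hjmin (j - 1) (by omega)
      have : C (t.take (j - 1 + 1)) ≤ C (t.take (j - 1)) + 1 := this
      rw [show j - 1 + 1 = j by omega] at this
      omega
    set w := t.take j with hw
    set r := t.drop j with hr
    have htr : w ++ r = t := List.take_append_drop j t
    have hwlen : w.length = j := by rw [hw, List.length_take]; omega
    have hCr : C r = d := by
      have := C_append w r
      rw [htr, h1, hjeq] at this
      push_cast at this ⊢
      linarith
    have hrpre : ∀ i < r.length, C (r.take i) ≤ (d : ℤ) - 1 := by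
      intro i hi
      have hkey : t.take (j + i) = w ++ r.take i := by
        rw [hw, hr, List.take_add]
      have hji : j + i < t.length := by
        rw [hr, List.length_drop] at hi
        omega
      have := h2 (j + i) hji
      rw [hkey, C_append, hjeq] at this
      push_cast at this ⊢
      linarith
    obtain ⟨ws, hlen, hflat, hall⟩ := ih r hCr hrpre
    refine ⟨w :: ws, by simp [hlen], by simp [hflat, htr], ?_⟩
    intro x hx
    rcases List.mem_cons.mp hx with h | h
    · subst h
      refine ⟨hjeq, ?_⟩
      intro i hi
      rw [hwlen] at hi
      have : w.take i = t.take i := by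
        rw [hw, List.take_take]
        congr 1
        omega
      rw [this]
      have := hjmin i hi
      omega
    · exact hall x h

lemma wf_of_C : ∀ n : ℕ, ∀ B : List ℕ, B.length ≤ n → C B = 1 →
    (∀ i < B.length, C (B.take i) ≤ 0) → IsWF B := by
  intro n
  induction n with
  | zero =>
    intro B hlen h1 _
    interval_cases h : B.length
    · rw [List.length_eq_zero_iff] at h
      simp [h, C] at h1
  | succ n ih =>
    intro B hlen h1 h2
    cases B with
    | nil => simp [C] at h1
    | cons d t =>
      have hCt : C t = d := by
        have := C_cons d t
        rw [h1] at this
        linarith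
      have htpre : ∀ i < t.length, C (t.take i) ≤ (d : ℤ) - 1 := by
        intro i hi
        have hsucc : (d :: t).take (i + 1) = d :: t.take i := rfl
        have := h2 (i + 1) (by simp; omega)
        rw [hsucc, C_cons] at this
        linarith
      obtain ⟨ws, hwslen, hflat, hall⟩ := splitPieces d t hCt htpre
      have : IsWF (d :: ws.flatten) := by
        refine IsWF.node d ws hwslen ?_
        intro w hw
        obtain ⟨hCw, hwpre⟩ := hall w hw
        refine ih w ?_ hCw hwpre
        have hsub : w.length ≤ t.length := by
          rw [← hflat]
          calc w.length ≤ (ws.flatten).length := by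
                rw [List.length_flatten]
                exact List.le_sum_of_mem (List.mem_map_of_mem (f := List.length) hw)
            _ = (ws.flatten).length := rfl
        simp at hlen
        omega
      rwa [hflat] at this

theorem stmt_9 (A : List ℕ) (hn : 1 ≤ A.length) (hC : C A = 1)
    (M : ℤ) (k : ℕ) (hk1 : 1 ≤ k) (hkn : k ≤ A.length)
    (hkM : C (A.take k) = M)
    (hmax : ∀ i : ℕ, 1 ≤ i → i ≤ A.length → C (A.take i) ≤ M)
    (hleast : ∀ i : ℕ, 1 ≤ i → i < k → C (A.take i) ≠ M) :
    IsWF (A.drop k ++ A.take k) := by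
  set B := A.drop k ++ A.take k with hB
  have hlenB : B.length = A.length := by simp [hB]; omega
  have hCA : C (A.take k) + C (A.drop k) = 1 := by
    rw [← C_append, List.take_append_drop, hC]
  have hCB : C B = 1 := by
    rw [hB, C_append]; linarith
  have hM1 : 1 ≤ M := by
    have := hmax A.length hn le_rfl
    rw [List.take_length, hC] at this
    exact this
  refine wf_of_C B.length B le_rfl hCB ?_
  intro i hi
  rw [hlenB] at hi
  set m := A.length - k with hm
  have hdl : (A.drop k).length = m := by simp [hm]
  by_cases hcase : i ≤ m
  · -- prefix inside A.drop k
    have htake : B.take i = (A.drop k).take i := by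
      rw [hB, List.take_append_of_le_length (by omega)]
    rcases Nat.eq_zero_or_pos i with h0 | h0
    · rw [htake, h0]; simp [C]
    · have hsplit : A.take (k + i) = A.take k ++ (A.drop k).take i := List.take_add (l := A) (i := k) (j := i)
      have hki : k + i ≤ A.length := by omega
      have := hmax (k + i) (by omega) hki
      rw [hsplit, C_append, hkM] at this
      rw [htake]
      linarith
  · -- prefix covers all of A.drop k plus part of A.take k
    push_neg at hcase
    set j := i - m with hj
    have hj1 : 1 ≤ j := by omega
    have hjk : j < k := by omega
    have htake : B.take i = A.drop k ++ (A.take k).take j := by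
      rw [hB, List.take_append]
      congr 2
      · exact List.take_of_length_le (by omega)
      · rw [hdl]
    have htt : (A.take k).take j = A.take j := by
      rw [List.take_take]; congr 1; omega
    have hle := hmax j hj1 (by omega)
    have hne := hleast j hj1 hjk
    have hlt : C (A.take j) ≤ M - 1 := by omega
    rw [htake, htt, C_append]
    have hCd : C (A.drop k) = 1 - M := by linarith [hkM]
    rw [hCd]
    linarith
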